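/- Let F be a nonarchimedean local field with ring of integers o_F and maximal ideal p_F, and let N ≥ 1 and e ≥ 1 be integers with e dividing N. For n ∈ ℤ, let 𝔓^n ⊆ M_N(F) be the o_F-lattice of matrices which, written as e×e block matrices with square blocks of size N/e, have all entries of the (i,j) block (1 ≤ i, j ≤ e) lying in p_F^{⌈(n + i − j)/e⌉}. Then for every integer n ≥ 1, the image of the set 1 + 𝔓^n = {1 + a : a ∈ 𝔓^n} under the determinant map det : GL_N(F) → F^× is exactly 1 + p_F^{⌈n/e⌉}; that is, det(1 + 𝔓^n) = 1 + p_F^{⌈n/e⌉}. -/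

import Mathlib

/-- A surjective additive `ℤ`-valued valuation on a field `K`, written additively with
values in `WithTop ℤ` (with `v 0 = ⊤`). -/
structure IsZValuation (K : Type*) [Field K] (v : K → WithTop ℤ) : Prop where
  map_zero : v 0 = ⊤
  map_one : v 1 = 0
  map_mul : ∀ x y : K, v (x * y) = v x + v y
  min_le_map_add : ∀ x y : K, min (v x) (v y) ≤ v (x + y)
  surjective : ∀ n : ℤ, ∃ x : K, v x = (n : WithTop ℤ)

/-- `K`, equipped with the normalized valuation `v`, is a nonarchimedean local field with
residue characteristic `p`: `v` is a surjective `ℤ`-valued valuation, `K` is (sequentially)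
complete with respect to `v`, the residue field is finite (the valuation ring is covered by
finitely many residue classes), and `p` is a prime number of positive valuation (so the
residue field has characteristic `p`). -/
structure IsNonarchLocalField (K : Type*) [Field K] (v : K → WithTop ℤ) (p : ℕ) : Prop where
  isZValuation : IsZValuation K v
  complete : ∀ f : ℕ → K,
    (∀ N : ℤ, ∃ M : ℕ, ∀ m, M ≤ m → ∀ n, M ≤ n → (N : WithTop ℤ) ≤ v (f m - f n)) →
    ∃ L : K, ∀ N : ℤ, ∃ M : ℕ, ∀ n, M ≤ n → (N : WithTop ℤ) ≤ v (f n - L)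
  finiteResidue : ∃ S : Finset K, ∀ x : K, 0 ≤ v x → ∃ s ∈ S, 0 < v (x - s)
  prime : p.Prime
  v_p_pos : 0 < v (p : K)
/-- Membership in the lattice `𝔓^n`, where `𝔓` is the Jacobson radical of the standard
principal hereditary order of period `e` in `M_N(F)`: writing a matrix in `e × e` blocks
of square size `N/e` (blocks indexed from `0`), all entries of the `(i,j)` block have
valuation at least `⌈(n + i - j)/e⌉`. -/
def memRadicalPow {F : Type*} [Field F] (v : F → WithTop ℤ) (N e : ℕ) (n : ℤ)
    (A : Matrix (Fin N) (Fin N) F) : Prop :=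
  ∀ a b : Fin N,
    ((Int.ceil (((n : ℚ) + (((a : ℕ) / (N / e) : ℕ) : ℚ) - (((b : ℕ) / (N / e) : ℕ) : ℚ)) / (e : ℚ))
        : ℤ) : WithTop ℤ) ≤ v (A a b)


section helpers
variable {F : Type*} [Field F] {v : F → WithTop ℤ}

lemma IsZValuation.v_neg_one (hv : IsZValuation F v) : v (-1 : F) = 0 := by
  have h := hv.map_mul (-1) (-1)
  rw [neg_mul_neg, one_mul, hv.map_one] at h
  cases hk : v (-1 : F) with
  | top => rw [hk] at h; simp at h
  | coe k =>
    rw [hk, ← WithTop.coe_add] at h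
    have hk0 : k + k = 0 := by exact_mod_cast h.symm
    have : k = 0 := by omega
    simp [this]

lemma IsZValuation.le_v_sum (hv : IsZValuation F v) {α : Type*} {c : WithTop ℤ} {s : Finset α}
    {f : α → F} (h : ∀ i ∈ s, c ≤ v (f i)) : c ≤ v (∑ i ∈ s, f i) := by
  induction s using Finset.cons_induction with
  | empty => simp [hv.map_zero]
  | cons a s ha ih =>
    rw [Finset.sum_cons]
    refine le_trans (le_min (h a (Finset.mem_cons_self a s)) ?_) (hv.min_le_map_add _ _)
    exact ih fun i hi => h i (Finset.mem_cons_of_mem hi)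

lemma IsZValuation.le_v_prod (hv : IsZValuation F v) {α : Type*} {s : Finset α} {w : α → ℤ}
    {f : α → F} (h : ∀ i ∈ s, ((w i : ℤ) : WithTop ℤ) ≤ v (f i)) :
    (((∑ i ∈ s, w i : ℤ)) : WithTop ℤ) ≤ v (∏ i ∈ s, f i) := by
  induction s using Finset.cons_induction with
  | empty => simp [hv.map_one]
  | cons a s ha ih =>
    rw [Finset.prod_cons, Finset.sum_cons, hv.map_mul, WithTop.coe_add]
    exact add_le_add (h a (Finset.mem_cons_self a s))
      (ih fun i hi => h i (Finset.mem_cons_of_mem hi))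

lemma IsZValuation.le_v_prod_sub_one (hv : IsZValuation F v) {α : Type*} {s : Finset α}
    {c : ℤ} (hc : 0 ≤ c)
    {f : α → F} (h : ∀ i ∈ s, (c : WithTop ℤ) ≤ v (f i - 1)) :
    (c : WithTop ℤ) ≤ v ((∏ i ∈ s, f i) - 1) := by
  induction s using Finset.cons_induction with
  | empty => simp [hv.map_zero]
  | cons a s ha ih =>
    have ih' : (c : WithTop ℤ) ≤ v ((∏ i ∈ s, f i) - 1) :=
      ih fun i hi => h i (Finset.mem_cons_of_mem hi)
    have hprod0 : (0 : WithTop ℤ) ≤ v (∏ i ∈ s, f i) := by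
      have hre : (∏ i ∈ s, f i) = ((∏ i ∈ s, f i) - 1) + 1 := by ring
      rw [hre]
      refine le_trans (le_min ?_ ?_) (hv.min_le_map_add _ _)
      · exact le_trans (by exact_mod_cast hc) ih'
      · rw [hv.map_one]
    have key : f a * ∏ i ∈ s, f i - 1 = (f a - 1) * ∏ i ∈ s, f i + ((∏ i ∈ s, f i) - 1) := by
      ring
    rw [Finset.prod_cons, key]
    refine le_trans (le_min ?_ ih') (hv.min_le_map_add _ _)
    rw [hv.map_mul]
    calc (c : WithTop ℤ) = (c : WithTop ℤ) + 0 := by simp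
    _ ≤ v (f a - 1) + v (∏ i ∈ s, f i) :=
        add_le_add (h a (Finset.mem_cons_self a s)) hprod0

lemma ceil_sum_le' {α : Type*} (s : Finset α) (q : α → ℚ) :
    ⌈∑ i ∈ s, q i⌉ ≤ ∑ i ∈ s, ⌈q i⌉ := by
  induction s using Finset.cons_induction with
  | empty => simp
  | cons a s ha ih =>
    rw [Finset.sum_cons, Finset.sum_cons]
    exact le_trans (Int.ceil_add_le _ _) (add_le_add le_rfl ih)

end helpers

/-- For a nonarchimedean local field `F` and the standard principal
hereditary order of period `e ∣ N` in `M_N(F)` with Jacobson radical `𝔓`, for every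
`n ≥ 1` the image of `1 + 𝔓^n` under the determinant is exactly `1 + p_F^⌈n/e⌉`. -/
theorem det_one_add_radicalPow_eq_one_add_maximalIdealPow
    (p : ℕ) (F : Type*) [Field F] (v : F → WithTop ℤ)
    (hF : IsNonarchLocalField F v p)
    (N e : ℕ) (hN : 1 ≤ N) (he : 1 ≤ e) (hdvd : e ∣ N)
    (n : ℕ) (hn : 1 ≤ n) :
    {x : F | ∃ A : Matrix (Fin N) (Fin N) F, memRadicalPow v N e (n : ℤ) A ∧
        x = Matrix.det (1 + A)} =
    {x : F | ((Int.ceil ((n : ℚ) / (e : ℚ)) : ℤ) : WithTop ℤ) ≤ v (x - 1)} := by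
  have hv := hF.isZValuation
  set c : ℤ := ⌈(n : ℚ) / (e : ℚ)⌉ with hcdef
  have he0 : (0 : ℚ) < (e : ℚ) := by exact_mod_cast he
  have hn0 : (0 : ℚ) < (n : ℚ) := by exact_mod_cast hn
  have hc1 : 1 ≤ c := by
    have : (0 : ℤ) < c := Int.lt_ceil.2 (by positivity)
    omega
  have hc0 : (0 : ℤ) ≤ c := by omega
  set B : Fin N → ℚ := fun i => (((i : ℕ) / (N / e) : ℕ) : ℚ) with hBdef
  ext x
  simp only [Set.mem_setOf_eq]
  constructor
  · rintro ⟨A, hA, rfl⟩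
    have hA' : ∀ a b : Fin N,
        ((⌈((n : ℚ) + B a - B b) / (e : ℚ)⌉ : ℤ) : WithTop ℤ) ≤ v (A a b) := hA
    have hAdiag : ∀ i : Fin N, (c : WithTop ℤ) ≤ v (A i i) := by
      intro i
      have := hA' i i
      simpa using this
    -- bound each permutation term
    have key : ∀ σ : Equiv.Perm (Fin N),
        (c : WithTop ℤ) ≤
          v ((((Equiv.Perm.sign σ : ℤ) : F) * ∏ i, (1 + A) (σ i) i)
            - if σ = 1 then 1 else 0) := by
      intro σ
      by_cases hσ : σ = 1
      · subst hσ
        simp only [if_pos rfl, Equiv.Perm.sign_one, Units.val_one, Int.cast_one, one_mul,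
          Equiv.Perm.one_apply]
        have hentry : ∀ i : Fin N, (1 + A) i i = 1 + A i i := by
          intro i; simp [Matrix.add_apply, Matrix.one_apply_eq]
        rw [show (∏ i, (1 + A) i i) = ∏ i, (1 + A i i) from Finset.prod_congr rfl
          fun i _ => hentry i]
        refine hv.le_v_prod_sub_one hc0 ?_
        intro i _
        have : (1 : F) + A i i - 1 = A i i := by ring
        rw [this]
        exact hAdiag i
      · rw [if_neg hσ, sub_zero]
        have hsign : v (((Equiv.Perm.sign σ : ℤ) : F)) = 0 := by
          rcases Int.units_eq_one_or (Equiv.Perm.sign σ) with h | h <;> rw [h]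
          · simpa using hv.map_one
          · simpa using hv.v_neg_one
        rw [hv.map_mul, hsign, zero_add]
        -- weights
        set w : Fin N → ℤ := fun i =>
          if σ i = i then 0 else ⌈((n : ℚ) + B (σ i) - B i) / (e : ℚ)⌉ with hwdef
        have hw : ∀ i ∈ Finset.univ, ((w i : ℤ) : WithTop ℤ) ≤ v ((1 + A) (σ i) i) := by
          intro i _
          by_cases hi : σ i = i
          · rw [hwdef]
            simp only [if_pos hi]
            rw [hi]
            have hone : (1 + A) i i = 1 + A i i := by simp [Matrix.add_apply, Matrix.one_apply_eq]
            rw [hone]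
            have h0 : ((0 : ℤ) : WithTop ℤ) = (0 : WithTop ℤ) := by norm_cast
            rw [h0]
            refine le_trans (le_min ?_ ?_) (hv.min_le_map_add _ _)
            · rw [hv.map_one]
            · exact le_trans (by exact_mod_cast hc0) (hAdiag i)
          · rw [hwdef]
            simp only [if_neg hi]
            have hone : (1 + A) (σ i) i = A (σ i) i := by
              simp [Matrix.add_apply, Matrix.one_apply_ne hi]
            rw [hone]
            exact hA' (σ i) i
        have hprod := hv.le_v_prod (s := Finset.univ) hw
        refine le_trans ?_ hprod
        rw [WithTop.coe_le_coe]
        -- now sum of weights ≥ c, in ℤ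
        set t : Finset (Fin N) := Finset.univ.filter (fun i => ¬ σ i = i) with htdef
        have hsumw : ∑ i, w i = ∑ i ∈ t, ⌈((n : ℚ) + B (σ i) - B i) / (e : ℚ)⌉ := by
          rw [htdef, Finset.sum_filter]
          refine Finset.sum_congr rfl fun i _ => ?_
          rw [hwdef]
          by_cases hi : σ i = i <;> simp [hi]
        have htne : t.Nonempty := by
          by_contra hte
          rw [Finset.not_nonempty_iff_eq_empty] at hte
          apply hσ
          ext i
          have : i ∉ t := by rw [hte]; exact Finset.notMem_empty i
          simp only [htdef, Finset.mem_filter, Finset.mem_univ, true_and, not_not] at this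
          simp [this]
        have hBsum : ∑ i ∈ t, B (σ i) = ∑ i ∈ t, B i := by
          refine Finset.sum_nbij' (fun i => σ i) (fun i => σ⁻¹ i) ?_ ?_ ?_ ?_ ?_
          · intro a ha
            simp only [htdef, Finset.mem_filter, Finset.mem_univ, true_and] at ha ⊢
            intro hcon
            exact ha (σ.injective hcon)
          · intro a ha
            simp only [htdef, Finset.mem_filter, Finset.mem_univ, true_and,
              Equiv.Perm.inv_def, Equiv.apply_symm_apply] at ha ⊢
            intro hcon
            apply ha
            conv_lhs => rw [hcon]
            exact Equiv.apply_symm_apply σ a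
          · intro a _; simp
          · intro a _; simp
          · intro a _; rfl
        have hqsum : ∑ i ∈ t, ((n : ℚ) + B (σ i) - B i) / (e : ℚ)
            = ((t.card : ℚ) * (n : ℚ)) / (e : ℚ) := by
          rw [← Finset.sum_div]
          congr 1
          rw [Finset.sum_sub_distrib, Finset.sum_add_distrib, hBsum]
          simp [mul_comm]
        have hceil : c ≤ ⌈∑ i ∈ t, ((n : ℚ) + B (σ i) - B i) / (e : ℚ)⌉ := by
          rw [hqsum, hcdef]
          apply Int.ceil_le_ceil
          gcongr
          have hcard : (1 : ℚ) ≤ (t.card : ℚ) := by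
            exact_mod_cast Nat.one_le_iff_ne_zero.2 (Finset.card_ne_zero_of_mem htne.choose_spec)
          nlinarith
        rw [hsumw]
        exact le_trans hceil (ceil_sum_le' t _)
    -- assemble
    have hdet : Matrix.det (1 + A) - 1 =
        ∑ σ : Equiv.Perm (Fin N),
          ((((Equiv.Perm.sign σ : ℤ) : F) * ∏ i, (1 + A) (σ i) i)
            - if σ = 1 then 1 else 0) := by
      rw [Matrix.det_apply', Finset.sum_sub_distrib]
      congr 1
      rw [Finset.sum_ite_eq' Finset.univ (1 : Equiv.Perm (Fin N)) (fun _ => (1 : F))]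
      simp
    rw [hdet]
    exact hv.le_v_sum fun σ _ => key σ
  · intro hx
    set i0 : Fin N := ⟨0, hN⟩ with hi0
    refine ⟨Matrix.single i0 i0 (x - 1), ?_, ?_⟩
    · intro a b
      by_cases hab : i0 = a ∧ i0 = b
      · obtain ⟨ha, hb⟩ := hab
        subst ha; subst hb
        rw [Matrix.single_apply_same]
        have : ((i0 : ℕ) / (N / e) : ℕ) = 0 := by
          rw [hi0]
          simp
        rw [this]
        simpa using hx
      · rw [Matrix.single]
        simp only [Matrix.of_apply, if_neg hab]
        rw [hv.map_zero]
        exact le_top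
    · have hdm : (1 : Matrix (Fin N) (Fin N) F) + Matrix.single i0 i0 (x - 1)
          = Matrix.diagonal (fun i => if i = i0 then x else 1) := by
        ext i j
        simp only [Matrix.add_apply, Matrix.single, Matrix.of_apply]
        by_cases hij : i = j
        · subst hij
          rw [Matrix.one_apply_eq, Matrix.diagonal_apply_eq]
          by_cases hii : i = i0
          · subst hii
            rw [if_pos ⟨rfl, rfl⟩, if_pos rfl]
            ring
          · rw [if_neg (fun h => hii h.1.symm), if_neg hii, add_zero]
        · rw [Matrix.one_apply_ne hij, Matrix.diagonal_apply_ne _ hij,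
            if_neg (fun h => hij (h.1.symm.trans h.2)), add_zero]
      rw [hdm, Matrix.det_diagonal]
      rw [Finset.prod_eq_single i0]
      · simp
      · intro i _ hi; simp [hi]
      · intro h; exact absurd (Finset.mem_univ i0) h
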